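/- Let K and H be vertex-disjoint (2,1)-tight simple graphs, u ∈ V(K), v ∈ V(H), and let G be the graph with V(G) = V(K) ∪ V(H) and E(G) = E(K) ∪ E(H) ∪ {uv}. Then G is (2,1)-tight. -/

import Mathlib

open SimpleGraph

def Sparse (ℓ : ℕ) {V : Type*} (G : SimpleGraph V) : Prop :=
  ∀ H : G.Subgraph, H.edgeSet.Nonempty → H.edgeSet.ncard + ℓ ≤ 2 * H.verts.ncard

def Tight (ℓ : ℕ) {V : Type*} (G : SimpleGraph V) : Prop :=
  Sparse ℓ G ∧ G.edgeSet.ncard + ℓ = 2 * Nat.card V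

/-- The edge joining move: the disjoint union of `K` and `H` together with the
single extra edge joining `u ∈ V(K)` to `v ∈ V(H)`. -/
def edgeJoin {A B : Type*} (K : SimpleGraph A) (H : SimpleGraph B) (u : A) (v : B) :
    SimpleGraph (A ⊕ B) :=
  SimpleGraph.fromRel (fun x y =>
    (∃ a b : A, x = Sum.inl a ∧ y = Sum.inl b ∧ K.Adj a b) ∨
    (∃ a b : B, x = Sum.inr a ∧ y = Sum.inr b ∧ H.Adj a b) ∨
    (x = Sum.inl u ∧ y = Sum.inr v))

section Aux

variable {A B : Type*} {K : SimpleGraph A} {H : SimpleGraph B} {u : A} {v : B}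

lemma edgeJoin_adj {x y : A ⊕ B} :
    (edgeJoin K H u v).Adj x y ↔
      (∃ a b, x = Sum.inl a ∧ y = Sum.inl b ∧ K.Adj a b) ∨
      (∃ a b, x = Sum.inr a ∧ y = Sum.inr b ∧ H.Adj a b) ∨
      (x = Sum.inl u ∧ y = Sum.inr v) ∨ (x = Sum.inr v ∧ y = Sum.inl u) := by
  simp only [edgeJoin, SimpleGraph.fromRel_adj]
  constructor
  · rintro ⟨hne, (⟨a,b,rfl,rfl,h⟩|⟨a,b,rfl,rfl,h⟩|⟨rfl,rfl⟩)|(⟨a,b,rfl,rfl,h⟩|⟨a,b,rfl,rfl,h⟩|⟨rfl,rfl⟩)⟩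
    · exact Or.inl ⟨a, b, rfl, rfl, h⟩
    · exact Or.inr (Or.inl ⟨a, b, rfl, rfl, h⟩)
    · exact Or.inr (Or.inr (Or.inl ⟨rfl, rfl⟩))
    · exact Or.inl ⟨b, a, rfl, rfl, h.symm⟩
    · exact Or.inr (Or.inl ⟨b, a, rfl, rfl, h.symm⟩)
    · exact Or.inr (Or.inr (Or.inr ⟨rfl, rfl⟩))
  · rintro (⟨a,b,rfl,rfl,h⟩|⟨a,b,rfl,rfl,h⟩|⟨rfl,rfl⟩|⟨rfl,rfl⟩)
    · exact ⟨by simpa using h.ne, Or.inl (Or.inl ⟨a, b, rfl, rfl, h⟩)⟩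
    · exact ⟨by simpa using h.ne, Or.inl (Or.inr (Or.inl ⟨a, b, rfl, rfl, h⟩))⟩
    · exact ⟨by simp, Or.inl (Or.inr (Or.inr ⟨rfl, rfl⟩))⟩
    · exact ⟨by simp, Or.inr (Or.inr (Or.inr ⟨rfl, rfl⟩))⟩

lemma edgeJoin_adj_inl_inl {a b : A} :
    (edgeJoin K H u v).Adj (Sum.inl a) (Sum.inl b) ↔ K.Adj a b := by
  simp [edgeJoin_adj]

lemma edgeJoin_adj_inr_inr {a b : B} :
    (edgeJoin K H u v).Adj (Sum.inr a) (Sum.inr b) ↔ H.Adj a b := by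
  simp [edgeJoin_adj]

/-- The restriction of a subgraph of `edgeJoin K H u v` to the left side. -/
def restrictL (S : (edgeJoin K H u v).Subgraph) : K.Subgraph where
  verts := Sum.inl ⁻¹' S.verts
  Adj a b := S.Adj (Sum.inl a) (Sum.inl b)
  adj_sub h := edgeJoin_adj_inl_inl.1 (S.adj_sub h)
  edge_vert h := S.edge_vert h
  symm := ⟨fun _ _ h => S.adj_symm h⟩

/-- The restriction of a subgraph of `edgeJoin K H u v` to the right side. -/
def restrictR (S : (edgeJoin K H u v).Subgraph) : H.Subgraph where
  verts := Sum.inr ⁻¹' S.verts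
  Adj a b := S.Adj (Sum.inr a) (Sum.inr b)
  adj_sub h := edgeJoin_adj_inr_inr.1 (S.adj_sub h)
  edge_vert h := S.edge_vert h
  symm := ⟨fun _ _ h => S.adj_symm h⟩

lemma subgraph_edgeSet_decomp (S : (edgeJoin K H u v).Subgraph) :
    S.edgeSet = (Sym2.map Sum.inl '' (restrictL S).edgeSet) ∪
      (Sym2.map Sum.inr '' (restrictR S).edgeSet) ∪
      (S.edgeSet ∩ {s(Sum.inl u, Sum.inr v)}) := by
  ext e
  induction e using Sym2.ind with
  | _ x y =>
    constructor
    · intro h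
      rw [SimpleGraph.Subgraph.mem_edgeSet] at h
      rcases edgeJoin_adj.1 (S.adj_sub h) with
        ⟨a,b,rfl,rfl,_⟩ | ⟨a,b,rfl,rfl,_⟩ | ⟨rfl,rfl⟩ | ⟨rfl,rfl⟩
      · exact Or.inl (Or.inl ⟨s(a, b), h, by simp [Sym2.map_pair_eq]⟩)
      · exact Or.inl (Or.inr ⟨s(a, b), h, by simp [Sym2.map_pair_eq]⟩)
      · exact Or.inr ⟨h, rfl⟩
      · exact Or.inr ⟨SimpleGraph.Subgraph.mem_edgeSet.2 h, Sym2.eq_swap⟩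
    · rintro ((⟨e', he', he⟩ | ⟨e', he', he⟩) | ⟨h, _⟩)
      · rw [← he]
        induction e' using Sym2.ind with
        | _ a b =>
          rw [Sym2.map_pair_eq]
          exact SimpleGraph.Subgraph.mem_edgeSet.2 he'
      · rw [← he]
        induction e' using Sym2.ind with
        | _ a b =>
          rw [Sym2.map_pair_eq]
          exact SimpleGraph.Subgraph.mem_edgeSet.2 he'
      · exact h

lemma graph_edgeSet_decomp :
    (edgeJoin K H u v).edgeSet = (Sym2.map Sum.inl '' K.edgeSet) ∪
      (Sym2.map Sum.inr '' H.edgeSet) ∪ {s(Sum.inl u, Sum.inr v)} := by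
  ext e
  induction e using Sym2.ind with
  | _ x y =>
    constructor
    · intro h
      rw [SimpleGraph.mem_edgeSet] at h
      rcases edgeJoin_adj.1 h with
        ⟨a,b,rfl,rfl,hab⟩ | ⟨a,b,rfl,rfl,hab⟩ | ⟨rfl,rfl⟩ | ⟨rfl,rfl⟩
      · exact Or.inl (Or.inl ⟨s(a, b), hab, by simp [Sym2.map_pair_eq]⟩)
      · exact Or.inl (Or.inr ⟨s(a, b), hab, by simp [Sym2.map_pair_eq]⟩)
      · exact Or.inr rfl
      · exact Or.inr Sym2.eq_swap
    · rintro ((⟨e', he', he⟩ | ⟨e', he', he⟩) | h)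
      · rw [← he]
        induction e' using Sym2.ind with
        | _ a b =>
          rw [Sym2.map_pair_eq]
          exact (SimpleGraph.mem_edgeSet _).2 (edgeJoin_adj_inl_inl.2 he')
      · rw [← he]
        induction e' using Sym2.ind with
        | _ a b =>
          rw [Sym2.map_pair_eq]
          exact (SimpleGraph.mem_edgeSet _).2 (edgeJoin_adj_inr_inr.2 he')
      · rw [Set.mem_singleton_iff] at h
        rw [h]
        exact (SimpleGraph.mem_edgeSet _).2 (edgeJoin_adj.2 (Or.inr (Or.inr (Or.inl ⟨rfl, rfl⟩))))

lemma disj_inl_inr {s : Set (Sym2 A)} {t : Set (Sym2 B)} :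
    Disjoint (Sym2.map Sum.inl '' s) (Sym2.map (Sum.inr : B → A ⊕ B) '' t) := by
  rw [Set.disjoint_left]
  rintro e ⟨e1, -, rfl⟩ ⟨e2, -, he⟩
  induction e1 using Sym2.ind with
  | _ a b =>
    induction e2 using Sym2.ind with
    | _ c d =>
      simp [Sym2.map_pair_eq, Sym2.eq_iff] at he

lemma not_mem_inl_image {s : Set (Sym2 A)} :
    s(Sum.inl u, (Sum.inr v : A ⊕ B)) ∉ Sym2.map Sum.inl '' s := by
  rintro ⟨e1, -, he⟩
  induction e1 using Sym2.ind with
  | _ a b => simp [Sym2.map_pair_eq, Sym2.eq_iff] at he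

lemma not_mem_inr_image {t : Set (Sym2 B)} :
    s((Sum.inl u : A ⊕ B), Sum.inr v) ∉ Sym2.map Sum.inr '' t := by
  rintro ⟨e1, -, he⟩
  induction e1 using Sym2.ind with
  | _ a b => simp [Sym2.map_pair_eq, Sym2.eq_iff] at he

end Aux

theorem stmt8 {A B : Type*} [Finite A] [Finite B]
    (K : SimpleGraph A) (H : SimpleGraph B) (u : A) (v : B)
    (hK : Tight 1 K) (hH : Tight 1 H) :
    Tight 1 (edgeJoin K H u v) := by
  have hinl : Function.Injective (Sum.inl : A → A ⊕ B) := Sum.inl_injective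
  have hinr : Function.Injective (Sum.inr : B → A ⊕ B) := Sum.inr_injective
  constructor
  · -- sparsity
    intro S hS
    -- edge count decomposition
    have hdisj1 : Disjoint (Sym2.map Sum.inl '' (restrictL S).edgeSet)
        (Sym2.map Sum.inr '' (restrictR S).edgeSet) := disj_inl_inr
    have hdisj2 : Disjoint ((Sym2.map Sum.inl '' (restrictL S).edgeSet) ∪
        (Sym2.map Sum.inr '' (restrictR S).edgeSet))
        (S.edgeSet ∩ {s(Sum.inl u, Sum.inr v)}) := by
      rw [Set.disjoint_right]
      rintro e ⟨-, he⟩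
      rw [Set.mem_singleton_iff] at he
      subst he
      rintro (h | h)
      · exact not_mem_inl_image h
      · exact not_mem_inr_image h
    have hcount : S.edgeSet.ncard = (restrictL S).edgeSet.ncard +
        (restrictR S).edgeSet.ncard + (S.edgeSet ∩ {s(Sum.inl u, Sum.inr v)}).ncard := by
      conv_lhs => rw [subgraph_edgeSet_decomp S]
      rw [Set.ncard_union_eq hdisj2 (Set.toFinite _) (Set.toFinite _),
        Set.ncard_union_eq hdisj1 (Set.toFinite _) (Set.toFinite _),
        Set.ncard_image_of_injective _ (Sym2.map.injective hinl),
        Set.ncard_image_of_injective _ (Sym2.map.injective hinr)]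
    -- vertex count decomposition
    have hverts : S.verts = Sum.inl '' (restrictL S).verts ∪ Sum.inr '' (restrictR S).verts := by
      ext x
      cases x <;> simp [restrictL, restrictR]
    have hvdisj : Disjoint (Sum.inl '' (restrictL S).verts)
        (Sum.inr '' (restrictR S).verts) := by
      rw [Set.disjoint_left]
      rintro x ⟨a, -, rfl⟩ ⟨b, -, h⟩
      simp at h
    have hvcount : S.verts.ncard = (restrictL S).verts.ncard + (restrictR S).verts.ncard := by
      rw [hverts, Set.ncard_union_eq hvdisj (Set.toFinite _) (Set.toFinite _),
        Set.ncard_image_of_injective _ hinl, Set.ncard_image_of_injective _ hinr]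
    -- bounds
    have hbL : (restrictL S).edgeSet.Nonempty →
        (restrictL S).edgeSet.ncard + 1 ≤ 2 * (restrictL S).verts.ncard := hK.1 _
    have hbR : (restrictR S).edgeSet.Nonempty →
        (restrictR S).edgeSet.ncard + 1 ≤ 2 * (restrictR S).verts.ncard := hH.1 _
    have hSpos : 1 ≤ S.edgeSet.ncard := (Set.ncard_pos (Set.toFinite _)).2 hS
    by_cases hc : s(Sum.inl u, Sum.inr v) ∈ S.edgeSet
    · have hc1 : (S.edgeSet ∩ {s(Sum.inl u, Sum.inr v)}).ncard = 1 := by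
        rw [Set.inter_eq_right.2 (by simpa using hc), Set.ncard_singleton]
      have hadj : S.Adj (Sum.inl u) (Sum.inr v) := SimpleGraph.Subgraph.mem_edgeSet.1 hc
      have huv : u ∈ (restrictL S).verts := S.edge_vert hadj
      have hvv : v ∈ (restrictR S).verts := S.edge_vert hadj.symm
      have hL1 : 1 ≤ (restrictL S).verts.ncard :=
        (Set.ncard_pos (Set.toFinite _)).2 ⟨u, huv⟩
      have hR1 : 1 ≤ (restrictR S).verts.ncard :=
        (Set.ncard_pos (Set.toFinite _)).2 ⟨v, hvv⟩
      by_cases hL : (restrictL S).edgeSet.Nonempty <;>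
        by_cases hR : (restrictR S).edgeSet.Nonempty
      · have := hbL hL; have := hbR hR; omega
      · have := hbL hL
        have : (restrictR S).edgeSet.ncard = 0 := by
          rw [Set.ncard_eq_zero (Set.toFinite _), ← Set.not_nonempty_iff_eq_empty]
          exact hR
        omega
      · have := hbR hR
        have : (restrictL S).edgeSet.ncard = 0 := by
          rw [Set.ncard_eq_zero (Set.toFinite _), ← Set.not_nonempty_iff_eq_empty]
          exact hL
        omega
      · have h1 : (restrictL S).edgeSet.ncard = 0 := by
          rw [Set.ncard_eq_zero (Set.toFinite _), ← Set.not_nonempty_iff_eq_empty]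
          exact hL
        have h2 : (restrictR S).edgeSet.ncard = 0 := by
          rw [Set.ncard_eq_zero (Set.toFinite _), ← Set.not_nonempty_iff_eq_empty]
          exact hR
        omega
    · have hc0 : (S.edgeSet ∩ {s(Sum.inl u, Sum.inr v)}).ncard = 0 := by
        rw [Set.inter_singleton_eq_empty.2 hc, Set.ncard_empty]
      by_cases hL : (restrictL S).edgeSet.Nonempty <;>
        by_cases hR : (restrictR S).edgeSet.Nonempty
      · have := hbL hL; have := hbR hR; omega
      · have := hbL hL
        have : (restrictR S).edgeSet.ncard = 0 := by
          rw [Set.ncard_eq_zero (Set.toFinite _), ← Set.not_nonempty_iff_eq_empty]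
          exact hR
        omega
      · have := hbR hR
        have : (restrictL S).edgeSet.ncard = 0 := by
          rw [Set.ncard_eq_zero (Set.toFinite _), ← Set.not_nonempty_iff_eq_empty]
          exact hL
        omega
      · have h1 : (restrictL S).edgeSet.ncard = 0 := by
          rw [Set.ncard_eq_zero (Set.toFinite _), ← Set.not_nonempty_iff_eq_empty]
          exact hL
        have h2 : (restrictR S).edgeSet.ncard = 0 := by
          rw [Set.ncard_eq_zero (Set.toFinite _), ← Set.not_nonempty_iff_eq_empty]
          exact hR
        omega
  · -- edge count
    have hdisj1 : Disjoint (Sym2.map Sum.inl '' K.edgeSet)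
        (Sym2.map Sum.inr '' H.edgeSet) := disj_inl_inr
    have hdisj2 : Disjoint ((Sym2.map Sum.inl '' K.edgeSet) ∪
        (Sym2.map Sum.inr '' H.edgeSet)) ({s(Sum.inl u, Sum.inr v)} : Set (Sym2 (A ⊕ B))) := by
      rw [Set.disjoint_right]
      rintro e he
      rw [Set.mem_singleton_iff] at he
      subst he
      rintro (h | h)
      · exact not_mem_inl_image h
      · exact not_mem_inr_image h
    have hcount : (edgeJoin K H u v).edgeSet.ncard =
        K.edgeSet.ncard + H.edgeSet.ncard + 1 := by
      rw [graph_edgeSet_decomp, Set.ncard_union_eq hdisj2 (Set.toFinite _) (Set.toFinite _),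
        Set.ncard_union_eq hdisj1 (Set.toFinite _) (Set.toFinite _),
        Set.ncard_image_of_injective _ (Sym2.map.injective hinl),
        Set.ncard_image_of_injective _ (Sym2.map.injective hinr), Set.ncard_singleton]
    rw [hcount, Nat.card_sum]
    have := hK.2
    have := hH.2
    omega
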